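/- Let X and Y be n×n real symmetric positive definite matrices. Then for all s, t ∈ [0,1], X *_s (X *_t Y) = X *_{st} Y. -/

import Mathlib

open Matrix Filter Topology
open scoped Classical

noncomputable section

/-- Square real matrices. -/
abbrev Mat (n : ℕ) := Matrix (Fin n) (Fin n) ℝ

/-- The largest element of the real spectrum of a matrix. -/
noncomputable def lamMax {n : ℕ} (A : Mat n) : ℝ := sSup (spectrum ℝ A)

/-- The smallest element of the real spectrum of a matrix. -/
noncomputable def lamMin {n : ℕ} (A : Mat n) : ℝ := sInf (spectrum ℝ A)

/-- The positive semidefinite square root (junk value `0` if not PSD). -/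
noncomputable def sqrtM {n : ℕ} (X : Mat n) : Mat n :=
  if h : X.PosSemidef then
    (h.1.eigenvectorUnitary : Mat n) * diagonal ((RCLike.ofReal : ℝ → ℝ) ∘ Real.sqrt ∘ h.1.eigenvalues) *
      (star (h.1.eigenvectorUnitary : Mat n))
  else 0

/-- `X^{-1/2}` for a positive definite matrix. -/
noncomputable def invSqrt {n : ℕ} (X : Mat n) : Mat n := (sqrtM X)⁻¹

/-- `λ_max(X^{-1/2} Y X^{-1/2})`, the largest generalized eigenvalue of the pair `(Y, X)`. -/
noncomputable def gmax {n : ℕ} (X Y : Mat n) : ℝ := lamMax (invSqrt X * Y * invSqrt X)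

/-- `λ_min(X^{-1/2} Y X^{-1/2})`, the smallest generalized eigenvalue of the pair `(Y, X)`. -/
noncomputable def gmin {n : ℕ} (X Y : Mat n) : ℝ := lamMin (invSqrt X * Y * invSqrt X)

/-- The Thompson geodesic `X *_t Y`. -/
noncomputable def thompson {n : ℕ} (X Y : Mat n) (t : ℝ) : Mat n :=
  if gmin X Y = gmax X Y then (gmin X Y) ^ t • X
  else ((gmax X Y ^ t - gmin X Y ^ t) / (gmax X Y - gmin X Y)) • Y +
    ((gmax X Y * gmin X Y ^ t - gmin X Y * gmax X Y ^ t) / (gmax X Y - gmin X Y)) • X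

/-- The Thompson part metric on positive definite matrices. -/
noncomputable def dT {n : ℕ} (X Y : Mat n) : ℝ :=
  max (Real.log (gmax X Y)) (Real.log (gmax Y X))

/-- Hilbert's projective metric on positive definite matrices. -/
noncomputable def dH {n : ℕ} (X Y : Mat n) : ℝ :=
  Real.log (gmax X Y / gmin X Y)

/-- The coefficient `m(X,Y) = dφ/dt(0)` of the Thompson geodesic. -/
noncomputable def mCoef {n : ℕ} (X Y : Mat n) : ℝ :=
  if gmax X Y = gmin X Y then 1 / gmin X Y
  else (Real.log (gmax X Y) - Real.log (gmin X Y)) / (gmax X Y - gmin X Y)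

/-- The coefficient `o(X,Y) = dψ/dt(0)` of the Thompson geodesic. -/
noncomputable def oCoef {n : ℕ} (X Y : Mat n) : ℝ :=
  if gmax X Y = gmin X Y then Real.log (gmin X Y) - 1
  else (gmax X Y * Real.log (gmin X Y) - gmin X Y * Real.log (gmax X Y)) /
    (gmax X Y - gmin X Y)

/-- The mean equation `∑ⱼ m(X*,Yⱼ)·Yⱼ + (∑ⱼ o(X*,Yⱼ))·X* = 0`. -/
def MeanEq {n k : ℕ} (Y : Fin k → Mat n) (Xs : Mat n) : Prop :=
  ∑ j, mCoef Xs (Y j) • Y j + (∑ j, oCoef Xs (Y j)) • Xs = 0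

/-- The Frobenius norm of a matrix. -/
noncomputable def frob {n : ℕ} (A : Mat n) : ℝ :=
  Real.sqrt (∑ i, ∑ j, (A i j) ^ 2)

/-- The inductive sequence of Algorithm 4.1: `indSeq hk Y X₁ i = X_{i+1}`, so that
`indSeq hk Y X₁ 0 = X₁` and `X_{i+1} = X_i *_{1/(i+1)} Y_j` with `j ≡ i (mod k)`,
`1 ≤ j ≤ k`. -/
noncomputable def indSeq {n k : ℕ} (hk : 0 < k) (Y : Fin k → Mat n) (X₁ : Mat n) :
    ℕ → Mat n
  | 0 => X₁
  | (i + 1) => thompson (indSeq hk Y X₁ i) (Y ⟨i % k, Nat.mod_lt i hk⟩)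
      (1 / ((i : ℝ) + 2))

/-- The map `T_p(X) = (⋯((X *_{1/(pk+2)} Y₁) *_{1/(pk+3)} Y₂)⋯) *_{1/((p+1)k+1)} Y_k`. -/
noncomputable def Tmap {n k : ℕ} (Y : Fin k → Mat n) (p : ℕ) (X : Mat n) : Mat n :=
  (List.finRange k).foldl
    (fun Z j => thompson Z (Y j) (1 / ((p : ℝ) * (k : ℝ) + ((j : ℕ) : ℝ) + 2))) X

/-- The spectral `t`-th power of a symmetric matrix (junk value `0` otherwise). -/
noncomputable def spdPow {n : ℕ} (A : Mat n) (t : ℝ) : Mat n :=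
  if h : A.IsHermitian then
    (h.eigenvectorUnitary : Mat n) * Matrix.diagonal (fun i => h.eigenvalues i ^ t) *
      (star (h.eigenvectorUnitary : Mat n))
  else 0

/-- The affine-invariant Riemannian geodesic `X #_t Y = X^{1/2} (X^{-1/2} Y X^{-1/2})^t X^{1/2}`. -/
noncomputable def riemann {n : ℕ} (X Y : Mat n) (t : ℝ) : Mat n :=
  sqrtM X * spdPow (invSqrt X * Y * invSqrt X) t * sqrtM X

namespace ThompsonAux

variable {n : ℕ}

lemma sqrtM_eq {X : Mat n} (hX : X.PosDef) : sqrtM X =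
    (hX.posSemidef.1.eigenvectorUnitary : Mat n) *
      diagonal ((RCLike.ofReal : ℝ → ℝ) ∘ Real.sqrt ∘ hX.posSemidef.1.eigenvalues) *
      (star (hX.posSemidef.1.eigenvectorUnitary : Mat n)) :=
  dif_pos hX.posSemidef

lemma sqrtM_mul_self {X : Mat n} (hX : X.PosDef) : sqrtM X * sqrtM X = X := by
  rw [sqrtM_eq hX]
  have hu := Unitary.coe_star_mul_self hX.posSemidef.1.eigenvectorUnitary
  calc _ = (hX.posSemidef.1.eigenvectorUnitary : Mat n) *
      (diagonal ((RCLike.ofReal : ℝ → ℝ) ∘ Real.sqrt ∘ hX.posSemidef.1.eigenvalues) *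
        ((star (hX.posSemidef.1.eigenvectorUnitary : Mat n)) *
          (hX.posSemidef.1.eigenvectorUnitary : Mat n)) *
      diagonal ((RCLike.ofReal : ℝ → ℝ) ∘ Real.sqrt ∘ hX.posSemidef.1.eigenvalues)) *
      (star (hX.posSemidef.1.eigenvectorUnitary : Mat n)) := by simp only [Matrix.mul_assoc]
    _ = X := by
      conv_rhs => rw [hX.posSemidef.1.spectral_theorem]
      rw [Unitary.conjStarAlgAut_apply, hu, Matrix.mul_one, diagonal_mul_diagonal]
      congr 3
      funext i
      simp [Real.mul_self_sqrt (hX.posSemidef.eigenvalues_nonneg i)]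

lemma sqrtM_posDef {X : Mat n} (hX : X.PosDef) : (sqrtM X).PosDef := by
  have hS : (sqrtM X).PosSemidef := by
    rw [sqrtM_eq hX, star_eq_conjTranspose]
    exact (PosSemidef.diagonal (fun i => by simp [Real.sqrt_nonneg])).mul_mul_conjTranspose_same _
  refine PosDef.of_dotProduct_mulVec_pos hS.1 (fun x hx => ?_)
  rcases lt_or_eq_of_le (hS.dotProduct_mulVec_nonneg x) with h | h
  · exact h
  · exfalso
    have h0 : sqrtM X *ᵥ x = 0 := (hS.dotProduct_mulVec_zero_iff x).mp h.symm
    have hX0 : X *ᵥ x = 0 := by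
      rw [← sqrtM_mul_self hX, ← Matrix.mulVec_mulVec, h0, Matrix.mulVec_zero]
    have := hX.dotProduct_mulVec_pos hx
    rw [hX0, dotProduct_zero] at this
    exact lt_irrefl _ this

lemma invSqrt_posDef {X : Mat n} (hX : X.PosDef) : (invSqrt X).PosDef :=
  (sqrtM_posDef hX).inv

lemma invSqrt_mul_self {X : Mat n} (hX : X.PosDef) : invSqrt X * X * invSqrt X = 1 := by
  have hu : IsUnit (sqrtM X).det := (sqrtM_posDef hX).det_pos.ne'.isUnit
  nth_rewrite 2 [← sqrtM_mul_self hX]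
  rw [invSqrt]
  simp only [← Matrix.mul_assoc]
  rw [Matrix.nonsing_inv_mul _ hu, one_mul, Matrix.mul_nonsing_inv _ hu]

lemma posDef_conj {A B : Mat n} (hA : A.PosDef) (hB : IsUnit B.det) (hH : B.IsHermitian) :
    (B * A * B).PosDef := by
  have key : (Bᴴ * A * B).PosDef := by
    rw [posDef_iff_dotProduct_mulVec]
    constructor
    · exact isHermitian_conjTranspose_mul_mul B hA.1
    · intro x hx
      have hBx : B *ᵥ x ≠ 0 := by
        intro h
        apply hx
        have hinj := Matrix.mulVec_injective_iff_isUnit.mpr (Matrix.isUnit_iff_isUnit_det _ |>.2 hB)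
        exact hinj (by simpa using h)
      simpa only [star_mulVec, dotProduct_mulVec, vecMul_vecMul] using hA.dotProduct_mulVec_pos hBx
  rwa [hH.eq] at key

lemma spec_nonempty (hn : 0 < n) {M : Mat n} (hM : M.IsHermitian) :
    (spectrum ℝ M).Nonempty := by
  haveI : Nonempty (Fin n) := ⟨⟨0, hn⟩⟩
  rw [hM.spectrum_real_eq_range_eigenvalues]
  exact Set.range_nonempty _

lemma spec_finite {M : Mat n} : (spectrum ℝ M).Finite := Matrix.finite_real_spectrum

open scoped Pointwise in
lemma spectrum_affine (M : Mat n) (c d : ℝ) (hc : c ≠ 0) :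
    spectrum ℝ (c • M + d • (1 : Mat n)) = (fun x => c * x + d) '' spectrum ℝ M := by
  have h1 : (d : ℝ) • (1 : Mat n) = algebraMap ℝ (Mat n) d := (Algebra.algebraMap_eq_smul_one d).symm
  have h2 : c • M = (Units.mk0 c hc : ℝˣ) • M := rfl
  rw [h1, ← spectrum.add_singleton_eq, h2, spectrum.unit_smul_eq_smul]
  rw [Set.add_singleton]
  ext x
  simp only [Set.mem_image, Set.mem_smul_set, smul_eq_mul, Units.val_mk0]
  constructor
  · rintro ⟨y, ⟨z, hz, rfl⟩, rfl⟩; exact ⟨z, hz, rfl⟩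
  · rintro ⟨z, hz, rfl⟩; exact ⟨c * z, ⟨z, hz, rfl⟩, rfl⟩

lemma lamMax_affine (hn : 0 < n) {M : Mat n} (hM : M.IsHermitian) {c : ℝ} (hc : 0 < c) (d : ℝ) :
    lamMax (c • M + d • (1 : Mat n)) = c * lamMax M + d := by
  rw [lamMax, lamMax, spectrum_affine M c d hc.ne']
  exact (Monotone.map_csSup_of_continuousAt
    (Continuous.continuousAt (by continuity))
    (fun x y h => by nlinarith)
    (spec_nonempty hn hM) spec_finite.bddAbove).symm

lemma lamMin_affine (hn : 0 < n) {M : Mat n} (hM : M.IsHermitian) {c : ℝ} (hc : 0 < c) (d : ℝ) :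
    lamMin (c • M + d • (1 : Mat n)) = c * lamMin M + d := by
  rw [lamMin, lamMin, spectrum_affine M c d hc.ne']
  exact (Monotone.map_csInf_of_continuousAt
    (Continuous.continuousAt (by continuity))
    (fun x y h => by nlinarith)
    (spec_nonempty hn hM) spec_finite.bddBelow).symm

lemma lamMin_pos (hn : 0 < n) {M : Mat n} (hM : M.PosDef) : 0 < lamMin M := by
  have hmem : lamMin M ∈ spectrum ℝ M :=
    Set.Nonempty.csInf_mem (spec_nonempty hn hM.1) spec_finite
  rw [hM.1.spectrum_real_eq_range_eigenvalues] at hmem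
  obtain ⟨i, hi⟩ := hmem
  rw [lamMin] at hi ⊢
  rw [← hi]
  exact hM.eigenvalues_pos i

lemma lamMin_le_lamMax (hn : 0 < n) {M : Mat n} (hM : M.IsHermitian) : lamMin M ≤ lamMax M :=
  csInf_le_csSup (spec_nonempty hn hM) spec_finite.bddBelow spec_finite.bddAbove

lemma lamMax_smul_one (hn : 0 < n) (r : ℝ) : lamMax (r • (1 : Mat n)) = r := by
  haveI : Nonempty (Fin n) := ⟨⟨0, hn⟩⟩
  rw [lamMax, ← Algebra.algebraMap_eq_smul_one, spectrum.scalar_eq, csSup_singleton]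

lemma lamMin_smul_one (hn : 0 < n) (r : ℝ) : lamMin (r • (1 : Mat n)) = r := by
  haveI : Nonempty (Fin n) := ⟨⟨0, hn⟩⟩
  rw [lamMin, ← Algebra.algebraMap_eq_smul_one, spectrum.scalar_eq, csInf_singleton]

lemma conj_smul {X : Mat n} (hX : X.PosDef) (r : ℝ) :
    invSqrt X * (r • X) * invSqrt X = r • (1 : Mat n) := by
  rw [mul_smul_comm, smul_mul_assoc, invSqrt_mul_self hX]

lemma conj_comb {X : Mat n} (hX : X.PosDef) (Y : Mat n) (a b : ℝ) :
    invSqrt X * (a • Y + b • X) * invSqrt X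
      = a • (invSqrt X * Y * invSqrt X) + b • (1 : Mat n) := by
  rw [Matrix.mul_add, Matrix.add_mul, mul_smul_comm, mul_smul_comm, smul_mul_assoc,
    smul_mul_assoc, invSqrt_mul_self hX]

lemma thompson_coef₁ {u v s t : ℝ} (hu : 0 < u) (huv : u < v) (ht : 0 < t) :
    (((v ^ t) ^ s - (u ^ t) ^ s) / (v ^ t - u ^ t)) * ((v ^ t - u ^ t) / (v - u))
      = (v ^ (s * t) - u ^ (s * t)) / (v - u) := by
  have h1 : v - u ≠ 0 := sub_ne_zero_of_ne huv.ne'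
  have h2 : v ^ t - u ^ t ≠ 0 := sub_ne_zero_of_ne (Real.rpow_lt_rpow hu.le huv ht).ne'
  rw [mul_comm s t, Real.rpow_mul hu.le, Real.rpow_mul (hu.trans huv).le]
  field_simp
  try ring

lemma thompson_coef₂ {u v s t : ℝ} (hu : 0 < u) (huv : u < v) (ht : 0 < t) :
    (((v ^ t) ^ s - (u ^ t) ^ s) / (v ^ t - u ^ t)) * ((v * u ^ t - u * v ^ t) / (v - u))
      + (v ^ t * (u ^ t) ^ s - u ^ t * (v ^ t) ^ s) / (v ^ t - u ^ t)
      = (v * u ^ (s * t) - u * v ^ (s * t)) / (v - u) := by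
  have h1 : v - u ≠ 0 := sub_ne_zero_of_ne huv.ne'
  have h2 : v ^ t - u ^ t ≠ 0 := sub_ne_zero_of_ne (Real.rpow_lt_rpow hu.le huv ht).ne'
  rw [mul_comm s t, Real.rpow_mul hu.le, Real.rpow_mul (hu.trans huv).le]
  field_simp
  try ring

end ThompsonAux

open ThompsonAux

/-- geodesic consistency `X *_s (X *_t Y) = X *_{st} Y`. -/
theorem thompson_consistency_left {n : ℕ} (X Y : Mat n) (hX : X.PosDef) (hY : Y.PosDef)
    (s t : ℝ) (hs : s ∈ Set.Icc (0 : ℝ) 1) (ht : t ∈ Set.Icc (0 : ℝ) 1) :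
    thompson X (thompson X Y t) s = thompson X Y (s * t) := by
  rcases Nat.eq_zero_or_pos n with hn | hn
  · subst hn; exact Subsingleton.elim _ _
  have hiH : (invSqrt X).IsHermitian := (invSqrt_posDef hX).1
  have hidet : IsUnit (invSqrt X).det := (invSqrt_posDef hX).det_pos.ne'.isUnit
  have hM : (invSqrt X * Y * invSqrt X).PosDef := posDef_conj hY hidet hiH
  have hα : 0 < gmin X Y := lamMin_pos hn hM
  have hαβ : gmin X Y ≤ gmax X Y := lamMin_le_lamMax hn hM.1
  have hβ : 0 < gmax X Y := lt_of_lt_of_le hα hαβ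
  by_cases hEq : gmin X Y = gmax X Y
  · -- degenerate case
    have hZ : thompson X Y t = gmin X Y ^ t • X := by rw [thompson, if_pos hEq]
    rw [hZ]
    have hg : gmin X (gmin X Y ^ t • X) = gmin X Y ^ t := by
      show lamMin (invSqrt X * (gmin X Y ^ t • X) * invSqrt X) = _
      rw [conj_smul hX, lamMin_smul_one hn]
    have hg' : gmax X (gmin X Y ^ t • X) = gmin X Y ^ t := by
      show lamMax (invSqrt X * (gmin X Y ^ t • X) * invSqrt X) = _
      rw [conj_smul hX, lamMax_smul_one hn]
    rw [thompson, if_pos (hg.trans hg'.symm), hg]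
    rw [thompson, if_pos hEq, mul_comm s t, Real.rpow_mul hα.le]
  · have hlt : gmin X Y < gmax X Y := lt_of_le_of_ne hαβ hEq
    have hβα : gmax X Y - gmin X Y ≠ 0 := sub_ne_zero_of_ne (Ne.symm hEq)
    by_cases ht0 : t = 0
    · subst ht0
      have hZ : thompson X Y 0 = X := by
        rw [thompson, if_neg hEq]
        simp only [Real.rpow_zero, sub_self, zero_div, zero_smul, zero_add, mul_one]
        rw [div_self hβα, one_smul]
      rw [mul_zero, hZ]
      have hg1 : gmin X X = 1 := by
        show lamMin (invSqrt X * X * invSqrt X) = 1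
        rw [invSqrt_mul_self hX, show (1 : Mat n) = (1 : ℝ) • (1 : Mat n) by rw [one_smul],
          lamMin_smul_one hn]
      have hg2 : gmax X X = 1 := by
        show lamMax (invSqrt X * X * invSqrt X) = 1
        rw [invSqrt_mul_self hX, show (1 : Mat n) = (1 : ℝ) • (1 : Mat n) by rw [one_smul],
          lamMax_smul_one hn]
      rw [thompson, if_pos (hg1.trans hg2.symm), hg1, Real.one_rpow, one_smul]
    · have htpos : 0 < t := lt_of_le_of_ne ht.1 (Ne.symm ht0)
      have hab : gmin X Y ^ t < gmax X Y ^ t := Real.rpow_lt_rpow hα.le hlt htpos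
      have hcpos : 0 < (gmax X Y ^ t - gmin X Y ^ t) / (gmax X Y - gmin X Y) :=
        div_pos (by linarith) (by linarith)
      have hZ : thompson X Y t
          = ((gmax X Y ^ t - gmin X Y ^ t) / (gmax X Y - gmin X Y)) • Y +
            ((gmax X Y * gmin X Y ^ t - gmin X Y * gmax X Y ^ t) / (gmax X Y - gmin X Y)) • X := by
        rw [thompson, if_neg hEq]
      have hconj : invSqrt X * (thompson X Y t) * invSqrt X
          = ((gmax X Y ^ t - gmin X Y ^ t) / (gmax X Y - gmin X Y)) •
              (invSqrt X * Y * invSqrt X) +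
            ((gmax X Y * gmin X Y ^ t - gmin X Y * gmax X Y ^ t) / (gmax X Y - gmin X Y)) •
              (1 : Mat n) := by
        rw [hZ]; exact conj_comb hX Y _ _
      have hMmax : lamMax (invSqrt X * Y * invSqrt X) = gmax X Y := rfl
      have hMmin : lamMin (invSqrt X * Y * invSqrt X) = gmin X Y := rfl
      have hgmax : gmax X (thompson X Y t) = gmax X Y ^ t := by
        show lamMax (invSqrt X * (thompson X Y t) * invSqrt X) = _
        rw [hconj, lamMax_affine hn hM.1 hcpos, hMmax]
        field_simp
        ring
      have hgmin : gmin X (thompson X Y t) = gmin X Y ^ t := by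
        show lamMin (invSqrt X * (thompson X Y t) * invSqrt X) = _
        rw [hconj, lamMin_affine hn hM.1 hcpos, hMmin]
        field_simp
        ring
      have hcond : ¬ gmin X (thompson X Y t) = gmax X (thompson X Y t) := by
        rw [hgmin, hgmax]; exact hab.ne
      rw [thompson, if_neg hcond, hgmin, hgmax, hZ]
      rw [thompson, if_neg hEq]
      rw [smul_add, smul_smul, smul_smul, add_assoc, ← add_smul]
      rw [thompson_coef₁ hα hlt htpos, thompson_coef₂ hα hlt htpos]
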